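/- For any a ∈ ℓ²(Λ) and τ > 0, the soft-thresholded vector S_τ(a) is the unique minimizer over x ∈ ℓ²(Λ) of the functional ‖x - a‖² + 2τ‖x‖₁ (with the convention that ‖x‖₁ = ∞ if x ∉ ℓ¹). -/

import Mathlib

open scoped ENNReal NNReal

noncomputable def softThr (τ t : ℝ) : ℝ := Real.sign t * max (|t| - τ) 0

/-- The `ℓ¹` "norm" with value in `ℝ≥0∞` (equal to `∞` when the sequence is not in `ℓ¹`). -/
noncomputable def l1e {I : Type*} (x : I → ℝ) : ℝ≥0∞ := ∑' i, (‖x i‖₊ : ℝ≥0∞)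

/-- The squared `ℓ²` distance with value in `ℝ≥0∞`. -/
noncomputable def dist2e {I : Type*} (x a : I → ℝ) : ℝ≥0∞ :=
  ∑' i, ENNReal.ofReal ((x i - a i) ^ 2)

lemma softThr_eq (τ a : ℝ) (hτ : 0 < τ) :
    softThr τ a = if a ≤ -τ then a + τ else if τ ≤ a then a - τ else 0 := by
  unfold softThr
  split_ifs with h1 h2
  · have ha : a < 0 := by linarith
    rw [Real.sign_of_neg ha, abs_of_neg ha, max_eq_left (by linarith)]
    ring
  · have ha : 0 < a := by linarith
    rw [Real.sign_of_pos ha, abs_of_pos ha, max_eq_left (by linarith)]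
    ring
  · rw [max_eq_right (by cases abs_cases a with
      | inl h => linarith [h.1]
      | inr h => linarith [h.1])]
    ring

lemma softThr_key (τ a x : ℝ) (hτ : 0 < τ) :
    (softThr τ a - a)^2 + 2*τ*|softThr τ a| + (x - softThr τ a)^2
      ≤ (x - a)^2 + 2*τ*|x| := by
  rw [softThr_eq τ a hτ]
  rcases abs_cases x with ⟨hx, hx0⟩ | ⟨hx, hx0⟩ <;> rw [hx] <;> split_ifs with h1 h2
  · rw [abs_of_nonpos (by linarith)]; nlinarith
  · rw [abs_of_nonneg (by linarith)]; nlinarith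
  · push_neg at h1 h2; rw [abs_zero]; nlinarith
  · rw [abs_of_nonpos (by linarith)]; nlinarith
  · rw [abs_of_nonneg (by linarith)]; nlinarith
  · push_neg at h1 h2; rw [abs_zero]; nlinarith

lemma softThr_abs_le (τ a : ℝ) (hτ : 0 < τ) : |softThr τ a| ≤ |a| := by
  rw [softThr_eq τ a hτ]
  rcases abs_cases a with ⟨h, h0⟩ | ⟨h, h0⟩ <;> rw [h] <;> split_ifs with h1 h2 <;>
    first
      | (rw [abs_of_nonpos (by linarith)]; linarith)
      | (rw [abs_of_nonneg (by linarith)]; linarith)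
      | (rw [abs_zero]; linarith)

lemma softThr_sub_abs_le (τ a : ℝ) (hτ : 0 < τ) : |softThr τ a - a| ≤ |a| := by
  rw [softThr_eq τ a hτ]
  rcases abs_cases a with ⟨h, h0⟩ | ⟨h, h0⟩ <;> split_ifs with h1 h2 <;>
    simp only [add_sub_cancel_left, sub_sub_cancel_left, zero_sub] <;>
    first
      | (rw [abs_of_nonpos (by linarith)]; linarith)
      | (rw [abs_of_nonneg (by linarith)]; linarith)
      | (rw [abs_neg, h]; linarith)
      | (rw [abs_neg]; simp [abs_of_nonneg hτ.le]; linarith)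
      | (rw [h]; linarith)

lemma softThr_ne_zero (τ a : ℝ) (hτ : 0 < τ) (h : softThr τ a ≠ 0) : τ ≤ |a| := by
  rw [softThr_eq τ a hτ] at h
  split_ifs at h with h1 h2
  · rw [abs_of_nonpos (by linarith)]; linarith
  · rw [abs_of_nonneg (by linarith)]; linarith
  · exact absurd rfl h

theorem stmt2 {I : Type*} [Countable I] (a : I → ℝ) (ha : Memℓp a 2) (τ : ℝ) (hτ : 0 < τ) :
    Memℓp (fun i => softThr τ (a i)) 2 ∧
    ∀ x : I → ℝ, Memℓp x 2 → x ≠ (fun i => softThr τ (a i)) →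
      dist2e (fun i => softThr τ (a i)) a + 2 * ENNReal.ofReal τ * l1e (fun i => softThr τ (a i))
        < dist2e x a + 2 * ENNReal.ofReal τ * l1e x := by
  set s : I → ℝ := fun i => softThr τ (a i) with hs
  have htwo : (2 : ℝ≥0∞).toReal = 2 := by simp
  have hsum_a : Summable fun i => ‖a i‖ ^ (2 : ℝ) := by
    have := ha.summable (p := 2) (by norm_num)
    rwa [htwo] at this
  have hsum_a' : Summable fun i => (a i) ^ 2 := by
    refine hsum_a.congr fun i => ?_
    rw [Real.rpow_two, Real.norm_eq_abs, sq_abs]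
  -- finite support of s
  have hfin : {i | s i ≠ 0}.Finite := by
    have h1 : {i | τ ^ 2 ≤ (a i) ^ 2}.Finite := by
      have := hsum_a'.tendsto_cofinite_zero
      have h2 : ∀ᶠ i in Filter.cofinite, (a i) ^ 2 < τ ^ 2 :=
        this.eventually (Filter.tendsto_id.eventually_lt_const (by positivity)
          |>.mono fun y hy => hy)
      simpa [Filter.eventually_cofinite, not_lt] using h2
    refine h1.subset fun i hi => ?_
    have h2 := softThr_ne_zero τ (a i) hτ hi
    simp only [Set.mem_setOf_eq]
    nlinarith [sq_abs (a i), abs_nonneg (a i)]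
  -- Memℓp s 2
  have hmem : Memℓp s 2 := by
    apply memℓp_gen
    rw [htwo]
    refine Summable.of_nonneg_of_le (fun i => by positivity) (fun i => ?_) hsum_a'
    rw [Real.rpow_two, Real.norm_eq_abs, ← sq_abs (a i)]
    exact pow_le_pow_left₀ (abs_nonneg _) (softThr_abs_le τ (a i) hτ) 2
  refine ⟨hmem, fun x hx hxne => ?_⟩
  -- finiteness of the LHS
  have hd_fin : dist2e s a ≠ ⊤ := by
    have hsum : Summable fun i => (s i - a i) ^ 2 := by
      refine Summable.of_nonneg_of_le (fun i => by positivity) (fun i => ?_) hsum_a'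
      rw [← sq_abs (s i - a i), ← sq_abs (a i)]
      exact pow_le_pow_left₀ (abs_nonneg _) (softThr_sub_abs_le τ (a i) hτ) 2
    rw [dist2e, ← ENNReal.ofReal_tsum_of_nonneg (fun i => by positivity) hsum]
    exact ENNReal.ofReal_ne_top
  have hl1_fin : l1e s ≠ ⊤ := by
    rw [l1e, tsum_eq_sum (s := hfin.toFinset)
      (fun i hi => by simpa using Set.Finite.mem_toFinset hfin |>.not.mp hi)]
    exact (ENNReal.sum_lt_top.mpr fun i _ => ENNReal.coe_lt_top).ne
  have hLHS_fin : dist2e s a + 2 * ENNReal.ofReal τ * l1e s ≠ ⊤ := by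
    simp [ENNReal.add_ne_top, ENNReal.mul_ne_top, hd_fin, hl1_fin, ENNReal.ofReal_ne_top]
  -- positivity of dist2e x s
  have hpos : dist2e x s ≠ 0 := by
    have : ∃ i, x i ≠ s i := by
      by_contra h
      push_neg at h
      exact hxne (funext h)
    obtain ⟨i, hi⟩ := this
    have : 0 < ENNReal.ofReal ((x i - s i) ^ 2) := by
      rw [ENNReal.ofReal_pos]
      have : x i - s i ≠ 0 := sub_ne_zero.mpr hi
      positivity
    exact (lt_of_lt_of_le this (ENNReal.le_tsum i)).ne'
  -- pointwise inequality in ℝ≥0∞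
  have hpt : ∀ i, ENNReal.ofReal ((s i - a i) ^ 2) + 2 * ENNReal.ofReal τ * ‖s i‖₊
      + ENNReal.ofReal ((x i - s i) ^ 2)
      ≤ ENNReal.ofReal ((x i - a i) ^ 2) + 2 * ENNReal.ofReal τ * ‖x i‖₊ := by
    intro i
    have e1 : ∀ t : ℝ, 2 * ENNReal.ofReal τ * (‖t‖₊ : ℝ≥0∞) = ENNReal.ofReal (2 * τ * |t|) := by
      intro t
      rw [show (‖t‖₊ : ℝ≥0∞) = ENNReal.ofReal |t| from Real.enorm_eq_ofReal_abs t, ← ENNReal.ofReal_ofNat 2,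
        ← ENNReal.ofReal_mul (by norm_num), ← ENNReal.ofReal_mul (by positivity)]
    rw [e1, e1, ← ENNReal.ofReal_add (by positivity) (by positivity),
      ← ENNReal.ofReal_add (by positivity) (by positivity),
      ← ENNReal.ofReal_add (by positivity) (by positivity)]
    exact ENNReal.ofReal_le_ofReal (softThr_key τ (a i) (x i) hτ)
  -- sum up
  have hsum_le : dist2e s a + 2 * ENNReal.ofReal τ * l1e s + dist2e x s
      ≤ dist2e x a + 2 * ENNReal.ofReal τ * l1e x := by
    rw [dist2e, dist2e, dist2e, l1e, l1e, ← ENNReal.tsum_mul_left, ← ENNReal.tsum_mul_left,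
      ← ENNReal.tsum_add, ← ENNReal.tsum_add, ← ENNReal.tsum_add]
    exact ENNReal.tsum_le_tsum hpt
  calc dist2e s a + 2 * ENNReal.ofReal τ * l1e s
      < dist2e s a + 2 * ENNReal.ofReal τ * l1e s + dist2e x s :=
        ENNReal.lt_add_right hLHS_fin hpos
    _ ≤ _ := hsum_le
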